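/- With the well-balanced interface reconstruction h^{−,*} = max(0, h⁻/φ⁻ + z⁻ − max(z⁺, z⁻))·min(φ⁺, φ⁻), under still-water conditions (u⁺ = u⁻ = 0 and h⁺/φ⁺ + z⁺ = h⁻/φ⁻ + z⁻), the modified left flux 𝓕ᴸ = 𝓕(Ũ^{−,*}, Ũ^{+,*}) + (0, (g/2)(h⁻)²/φ⁻ − (g/2)(h^{−,*})²/min(φ⁺, φ⁻)) equals the exact flux F(Ũ⁻) = (0, ½g(h⁻)²/φ⁻). -/
import Mathlib


/-- Well-balancedness of the modified left flux: under still-water conditions,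
the reconstructed Lax–Friedrichs flux plus the corrector term equals the exact
flux `F(Ũ⁻) = (0, ½g(h⁻)²/φ⁻)`. -/
theorem well_balanced_left_flux
    (g α : ℝ) (hg : 0 < g)
    (hp hm zp zm φp φm : ℝ)
    (hφp : 0 < φp) (hφm : 0 < φm) (hhp : 0 ≤ hp) (hhm : 0 ≤ hm)
    (hsw : hp / φp + zp = hm / φm + zm) :
    let φmin := min φp φm
    let hps := max 0 (hp / φp + zp - max zp zm) * φmin
    let hms := max 0 (hm / φm + zm - max zp zm) * φmin
    -- 1D porous SWE flux with porosity φmin, state (h, q):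
    let F : ℝ → ℝ → ℝ × ℝ := fun h q => (q, q ^ 2 / h + (1 / 2) * g * h ^ 2 / φmin)
    -- local Lax–Friedrichs flux on the reconstructed states (velocities zero):
    let 𝓕 : ℝ × ℝ :=
      ((1 / 2) * ((F hms 0).1 + (F hps 0).1 + α * (hms - hps)),
       (1 / 2) * ((F hms 0).2 + (F hps 0).2 + α * (0 - 0)))
    -- modified flux with corrector term:
    (𝓕.1 + 0, 𝓕.2 + ((g / 2) * hm ^ 2 / φm - (g / 2) * hms ^ 2 / φmin)) =
      (0, (1 / 2) * g * hm ^ 2 / φm) := by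
  intro φmin hps hms F 𝓕
  have hEq : hps = hms := by simp only [hps, hms, hsw]
  have h0 : (0:ℝ) ^ 2 / hms = 0 := by simp
  simp only [𝓕, F, hEq, h0, Prod.mk.injEq]
  constructor <;> ring
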